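/- Let f(w) = (1/2)⟨w, Aw⟩ − ⟨b, w⟩ + c be a quadratic function on ℝⁿ with A symmetric positive definite. Let x ∈ ℝⁿ with g := ∇f(x) ≠ 0, let t := 2‖g‖²/⟨g, Ag⟩, y := x − t·g, and h := ∇f(y). Assume g and h are linearly independent, and let p := x + α·g + β·h be the ellipcenter iterate, where Δ := ⟨h, Ah⟩⟨g, Ag⟩ − ⟨g, Ah⟩², α := (⟨h, g⟩⟨g, Ah⟩ − ⟨g, g⟩⟨h, Ah⟩)/Δ, β := (−⟨h, g⟩⟨g, Ag⟩ + ⟨g, g⟩⟨h, Ag⟩)/Δ. Let x_grad := x − (t/2)·g be the iterate of the gradient method with optimal step. Then f(p) ≤ f(x_grad). -/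

import Mathlib

open Matrix

theorem quad_aux (γ η G M H Δ α β t : ℝ) (hG : 0 < G) (hΔp : 0 < Δ)
    (hΔ : Δ = H * G - M ^ 2)
    (hα : α = (η * M - γ * H) / Δ) (hβ : β = (-η * G + γ * M) / Δ)
    (ht : t = 2 * γ / G) :
    α * γ + β * η + (1/2) * (α^2 * G + 2 * (α * β) * M + β^2 * H)
      ≤ -(t/2) * γ + (1/2) * ((t/2)^2 * G) := by
  have hΔne : Δ ≠ 0 := ne_of_gt hΔp
  have hGne : G ≠ 0 := ne_of_gt hG
  have key : (-(t/2) * γ + (1/2) * ((t/2)^2 * G))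
      - (α * γ + β * η + (1/2) * (α^2 * G + 2 * (α * β) * M + β^2 * H))
      = (G * η - γ * M)^2 / (2 * G * Δ) := by
    subst hα hβ ht
    field_simp
    subst hΔ
    ring
  have hnn : 0 ≤ (G * η - γ * M)^2 / (2 * G * Δ) := by positivity
  linarith [key ▸ hnn]

/-- The ellipcenter iterate `p` is at least as good as the iterate
`x_grad = x − (t/2)·g` of the gradient method with optimal step: `f(p) ≤ f(x_grad)`. -/
theorem stmt11 {n : ℕ} (A : Matrix (Fin n) (Fin n) ℝ) (hA : A.PosDef)
    (b : Fin n → ℝ) (c : ℝ) (f : (Fin n → ℝ) → ℝ)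
    (hf : ∀ w, f w = (1/2) * (w ⬝ᵥ A.mulVec w) - b ⬝ᵥ w + c)
    (x g : Fin n → ℝ) (hg : g = A.mulVec x - b) (hg0 : g ≠ 0)
    (t : ℝ) (ht : t = 2 * (g ⬝ᵥ g) / (g ⬝ᵥ A.mulVec g))
    (y : Fin n → ℝ) (hy : y = x - t • g)
    (h : Fin n → ℝ) (hh : h = A.mulVec y - b)
    (hindep : LinearIndependent ℝ ![g, h])
    (Δ α β : ℝ)
    (hΔ : Δ = (h ⬝ᵥ A.mulVec h) * (g ⬝ᵥ A.mulVec g) - (g ⬝ᵥ A.mulVec h) ^ 2)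
    (hα : α = ((h ⬝ᵥ g) * (g ⬝ᵥ A.mulVec h) - (g ⬝ᵥ g) * (h ⬝ᵥ A.mulVec h)) / Δ)
    (hβ : β = (-(h ⬝ᵥ g) * (g ⬝ᵥ A.mulVec g) + (g ⬝ᵥ g) * (h ⬝ᵥ A.mulVec g)) / Δ)
    (p : Fin n → ℝ) (hp : p = x + α • g + β • h)
    (xgrad : Fin n → ℝ) (hxgrad : xgrad = x - (t / 2) • g) :
    f p ≤ f xgrad := by
  have hpos : ∀ u : Fin n → ℝ, u ≠ 0 → 0 < u ⬝ᵥ A.mulVec u := fun u hu => by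
    simpa using hA.dotProduct_mulVec_pos hu
  have hAt : Aᵀ = A := by simpa [Matrix.IsSymm] using hA.isHermitian
  have hsymm : ∀ u v : Fin n → ℝ, u ⬝ᵥ A.mulVec v = v ⬝ᵥ A.mulVec u := by
    intro u v
    rw [dotProduct_mulVec, ← mulVec_transpose, hAt, dotProduct_comm]
  have hGpos : 0 < g ⬝ᵥ A.mulVec g := hpos g hg0
  have hGne : g ⬝ᵥ A.mulVec g ≠ 0 := ne_of_gt hGpos
  -- Δ > 0 via linear independence
  have hind2 := linearIndependent_fin2.mp hindep
  have hind2' : h ≠ 0 ∧ ∀ a : ℝ, a • h ≠ g := by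
    simpa using hind2
  set G : ℝ := g ⬝ᵥ A.mulVec g with hGdef
  set M : ℝ := g ⬝ᵥ A.mulVec h with hMdef
  set H : ℝ := h ⬝ᵥ A.mulVec h with hHdef
  have hMh : h ⬝ᵥ A.mulVec g = M := hsymm h g
  have hs0 : G • h - M • g ≠ 0 := by
    intro hs
    have hEq : G • h = M • g := sub_eq_zero.mp hs
    by_cases hM0 : M = 0
    · have hzero : G • h = (0 : Fin n → ℝ) := by rw [hEq, hM0, zero_smul]
      rcases smul_eq_zero.mp hzero with h1 | h2
      · exact hGne h1
      · exact hind2'.1 h2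
    · apply hind2'.2 (G / M)
      rw [div_eq_mul_inv, mul_comm, mul_smul, hEq, smul_smul, inv_mul_cancel₀ hM0, one_smul]
  have hsq : 0 < (G • h - M • g) ⬝ᵥ A.mulVec (G • h - M • g) := hpos _ hs0
  have hexp : (G • h - M • g) ⬝ᵥ A.mulVec (G • h - M • g) = G * Δ := by
    simp only [mulVec_smul, mulVec_sub, dotProduct_sub, sub_dotProduct,
      dotProduct_smul, smul_dotProduct, smul_eq_mul]
    rw [hMh, hΔ]
    ring
  have hΔpos : 0 < Δ := by
    have hGΔ : 0 < G * Δ := hexp ▸ hsq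
    nlinarith
  -- expansion of f around x
  have expand : ∀ s : Fin n → ℝ, f (x + s) = f x + s ⬝ᵥ g + (1/2) * (s ⬝ᵥ A.mulVec s) := by
    intro s
    rw [hf, hf, hg]
    simp only [mulVec_add, dotProduct_add, add_dotProduct, dotProduct_sub, sub_dotProduct]
    rw [hsymm x s, dotProduct_comm s b]
    ring
  have hfp : f p = f x + (α • g + β • h) ⬝ᵥ g
      + (1/2) * ((α • g + β • h) ⬝ᵥ A.mulVec (α • g + β • h)) := by
    rw [hp, add_assoc]; exact expand _
  have hfq : f xgrad = f x + ((-(t/2)) • g) ⬝ᵥ g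
      + (1/2) * (((-(t/2)) • g) ⬝ᵥ A.mulVec ((-(t/2)) • g)) := by
    rw [hxgrad, sub_eq_add_neg, ← neg_smul]; exact expand _
  have e1 : (α • g + β • h) ⬝ᵥ g = α * (g ⬝ᵥ g) + β * (h ⬝ᵥ g) := by
    simp [add_dotProduct, smul_dotProduct, smul_eq_mul]
  have e2 : (α • g + β • h) ⬝ᵥ A.mulVec (α • g + β • h)
      = α^2 * G + 2 * (α * β) * M + β^2 * H := by
    simp only [mulVec_add, mulVec_smul, dotProduct_add, add_dotProduct,
      dotProduct_smul, smul_dotProduct, smul_eq_mul]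
    rw [hMh]
    ring
  have e3 : ((-(t/2)) • g) ⬝ᵥ g = -(t/2) * (g ⬝ᵥ g) := by
    simp [smul_dotProduct, smul_eq_mul]
  have e4 : ((-(t/2)) • g) ⬝ᵥ A.mulVec ((-(t/2)) • g) = (t/2)^2 * G := by
    simp only [mulVec_smul, dotProduct_smul, smul_dotProduct, smul_eq_mul]
    ring
  rw [hfp, hfq, e1, e2, e3, e4]
  have main := quad_aux (g ⬝ᵥ g) (h ⬝ᵥ g) G M H Δ α β t hGpos hΔpos
    hΔ hα (by rw [hβ, hMh]) ht
  linarith
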